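/- arXiv:2309.08124 — 5 statements merged into one kernel-verified Lean document; each statement's English description precedes it below -/
import Mathlib

section
/- The Fermat cubic threefold {x₀³ + x₁³ + x₂³ + x₃³ + x₄³ = 0} ⊂ ℙ⁴ has exactly 30 Eckardt points, namely the points with exactly two nonzero coordinates 1 and ξ (in positions i < j) where ξ³ = -1: there are 10 choices of the pair (i,j) and 3 choices of ξ. -/
open Projectivization Finset

noncomputable section EckAux

def vv (i j : Fin 5) (ξ : ℂ) : Fin 5 → ℂ := fun k => if k = i then 1 else if k = j then ξ else 0

lemma vv_ne_zero (i j : Fin 5) (ξ : ℂ) : vv i j ξ ≠ 0 := by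
  intro h
  have := congrFun h i
  simp [vv] at this

lemma rank_cond (w : Fin 5 → ℂ) :
    (Matrix.diagonal (fun i => 3 * w i)).rank ≤ 2 ↔
      (Finset.univ.filter (fun i => w i ≠ 0)).card ≤ 2 := by
  rw [Matrix.rank_diagonal, Fintype.card_subtype]
  constructor <;> intro h <;>
  · convert h using 2
    ext i
    simp

lemma sum_vv (i j : Fin 5) (hij : i ≠ j) (ξ : ℂ) :
    ∑ k, (vv i j ξ k) ^ 3 = 1 + ξ ^ 3 := by
  have : ∀ k, (vv i j ξ k) ^ 3 = (if k = i then 1 else 0) + (if k = j then ξ ^ 3 else 0) := by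
    intro k
    by_cases h1 : k = i
    · subst h1; simp [vv, hij.symm, if_neg]
      intro h; exact absurd h hij
    · by_cases h2 : k = j <;> simp [vv, h1, h2, Ne.symm hij]
  simp only [this, Finset.sum_add_distrib, Finset.sum_ite_eq', Finset.mem_univ, if_true]

lemma filter_vv (i j : Fin 5) (hij : i ≠ j) (ξ : ℂ) (hξ : ξ ≠ 0) :
    (Finset.univ.filter (fun k => vv i j ξ k ≠ 0)) = {i, j} := by
  ext k
  simp only [Finset.mem_filter, Finset.mem_univ, true_and, Finset.mem_insert, Finset.mem_singleton]
  by_cases h1 : k = i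
  · simp [vv, h1]
  · by_cases h2 : k = j <;> simp [vv, h1, h2, hξ, Ne.symm hij]

noncomputable def ra : ℂ := (1 + Real.sqrt 3 * Complex.I) / 2
noncomputable def rb : ℂ := (1 - Real.sqrt 3 * Complex.I) / 2

lemma s3 : ((Real.sqrt 3 : ℝ) : ℂ) ^ 2 = 3 := by
  norm_cast
  rw [Real.sq_sqrt] <;> norm_num

lemma hs : ((Real.sqrt 3 : ℝ) : ℂ) * Complex.I * ((Real.sqrt 3 : ℝ) * Complex.I) = -3 := by
  have hI := Complex.I_sq
  linear_combination Complex.I ^ 2 * s3 + 3 * hI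

lemma cube_factor (ξ : ℂ) : ξ ^ 3 + 1 = (ξ + 1) * (ξ - ra) * (ξ - rb) := by
  unfold ra rb
  linear_combination ((ξ + 1) / 4) * hs

lemma mem_roots3 (ξ : ℂ) : ξ ^ 3 = -1 ↔ ξ = -1 ∨ ξ = ra ∨ ξ = rb := by
  rw [← add_eq_zero_iff_eq_neg, cube_factor, mul_eq_zero, mul_eq_zero]
  constructor
  · rintro ((h | h) | h)
    · left; linear_combination h
    · right; left; linear_combination h
    · right; right; linear_combination h
  · rintro (h | h | h) <;> subst h <;> simp

lemma sqrt3C_ne : ((Real.sqrt 3 : ℝ) : ℂ) ≠ 0 :=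
  Complex.ofReal_ne_zero.mpr (by positivity)

lemma ra_ne_rb : ra ≠ rb := by
  intro h
  have h2 : ra - rb = (Real.sqrt 3 : ℂ) * Complex.I := by unfold ra rb; ring
  rw [h, sub_self] at h2
  exact (mul_ne_zero sqrt3C_ne Complex.I_ne_zero) h2.symm

lemma neg_one_ne_ra : (-1 : ℂ) ≠ ra := by
  intro h
  have h2 : ra + 1 = (3 + (Real.sqrt 3 : ℂ) * Complex.I) / 2 := by unfold ra; ring
  rw [← h] at h2
  simp only [neg_add_cancel] at h2
  have := congrArg Complex.re h2.symm
  simp [Complex.div_re] at this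

lemma neg_one_ne_rb : (-1 : ℂ) ≠ rb := by
  intro h
  have h2 : rb + 1 = (3 - (Real.sqrt 3 : ℂ) * Complex.I) / 2 := by unfold rb; ring
  rw [← h] at h2
  simp only [neg_add_cancel] at h2
  have := congrArg Complex.re h2.symm
  simp [Complex.div_re] at this

/-- The key pointwise characterization. -/
lemma key (x : Projectivization ℂ (Fin 5 → ℂ)) :
    ((∑ i, x.rep i ^ 3 = 0) ∧ (Matrix.diagonal (fun i => 3 * x.rep i)).rank ≤ 2) ↔
    ∃ (i j : Fin 5) (ξ : ℂ), i < j ∧ ξ ^ 3 = -1 ∧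
      x = Projectivization.mk ℂ (vv i j ξ) (vv_ne_zero i j ξ) := by
  constructor
  · rintro ⟨h1, h2⟩
    rw [rank_cond] at h2
    set s := Finset.univ.filter (fun i => x.rep i ≠ 0) with hsdef
    have hsum : ∑ k ∈ s, x.rep k ^ 3 = 0 := by
      rw [← h1]
      refine Finset.sum_subset (Finset.subset_univ s) ?_
      intro k _ hk
      have : x.rep k = 0 := by
        by_contra hne
        exact hk (Finset.mem_filter.mpr ⟨Finset.mem_univ _, hne⟩)
      simp [this]
    have main : ∀ a b : Fin 5, a < b → s = {a, b} → ∃ (i j : Fin 5) (ξ : ℂ), i < j ∧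
        ξ ^ 3 = -1 ∧ x = Projectivization.mk ℂ (vv i j ξ) (vv_ne_zero i j ξ) := by
      intro a b hab hs
      have ha : x.rep a ≠ 0 := by
        have : a ∈ s := hs ▸ Finset.mem_insert_self a {b}
        exact (Finset.mem_filter.mp this).2
      have hb : x.rep b ≠ 0 := by
        have : b ∈ s := hs ▸ (by simp : b ∈ ({a, b} : Finset (Fin 5)))
        exact (Finset.mem_filter.mp this).2
      have hsum2 : x.rep a ^ 3 + x.rep b ^ 3 = 0 := by
        rw [hs, Finset.sum_pair hab.ne] at hsum
        exact hsum
      refine ⟨a, b, x.rep b / x.rep a, hab, ?_, ?_⟩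
      · field_simp
        linear_combination hsum2
      · have hrep : x.rep = x.rep a • vv a b (x.rep b / x.rep a) := by
          funext k
          simp only [Pi.smul_apply, smul_eq_mul, vv]
          by_cases h1' : k = a
          · subst h1'; simp
          · by_cases h2' : k = b
            · subst h2'
              rw [if_neg h1', if_pos rfl, mul_div_cancel₀ _ ha]
            · rw [if_neg h1', if_neg h2', mul_zero]
              by_contra hne
              have : k ∈ s := Finset.mem_filter.mpr ⟨Finset.mem_univ _, hne⟩
              rw [hs] at this
              simp [h1', h2'] at this
        conv_lhs => rw [← x.mk_rep]
        rw [mk_eq_mk_iff']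
        exact ⟨x.rep a, hrep.symm⟩
    have hne : s.Nonempty := by
      obtain ⟨i, hi⟩ := Function.ne_iff.mp x.rep_nonzero
      exact ⟨i, Finset.mem_filter.mpr ⟨Finset.mem_univ _, by simpa using hi⟩⟩
    rcases Nat.lt_or_ge s.card 2 with hlt | hge
    · exfalso
      have h1card : s.card = 1 := le_antisymm (by omega) (Finset.card_pos.mpr hne)
      obtain ⟨a, hsa⟩ := Finset.card_eq_one.mp h1card
      have ha : x.rep a ≠ 0 := by
        have : a ∈ s := hsa ▸ Finset.mem_singleton_self a
        exact (Finset.mem_filter.mp this).2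
      rw [hsa, Finset.sum_singleton] at hsum
      exact ha (pow_eq_zero_iff (by norm_num) |>.mp hsum)
    · have h2card : s.card = 2 := le_antisymm h2 hge
      obtain ⟨a, b, hab, hsab⟩ := Finset.card_eq_two.mp h2card
      rcases hab.lt_or_gt with h | h
      · exact main a b h hsab
      · exact main b a h (hsab.trans (Finset.pair_comm a b))
  · rintro ⟨i, j, ξ, hij, hξ, rfl⟩
    have hξ0 : ξ ≠ 0 := by
      intro h; rw [h] at hξ; norm_num at hξ
    obtain ⟨c, hc⟩ := exists_smul_eq_mk_rep ℂ (vv i j ξ) (vv_ne_zero i j ξ)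
    constructor
    · rw [← hc]
      simp only [Pi.smul_apply, Units.smul_def, smul_eq_mul, mul_pow, ← Finset.mul_sum,
        sum_vv i j hij.ne ξ, hξ]
      ring
    · rw [rank_cond]
      have : (Finset.univ.filter
          (fun k => (Projectivization.mk ℂ (vv i j ξ) (vv_ne_zero i j ξ)).rep k ≠ 0)) = {i, j} := by
        rw [← filter_vv i j hij.ne ξ hξ0]
        apply Finset.filter_congr
        intro k _
        rw [← hc]
        simp [Units.smul_def, mul_eq_zero, Units.ne_zero c]
      rw [this, Finset.card_pair hij.ne]

lemma vv_inj {i j i' j' : Fin 5} {ξ ξ' : ℂ} (hij : i < j) (hij' : i' < j')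
    (hξ : ξ ≠ 0) (hξ' : ξ' ≠ 0)
    (h : Projectivization.mk ℂ (vv i j ξ) (vv_ne_zero i j ξ) =
        Projectivization.mk ℂ (vv i' j' ξ') (vv_ne_zero i' j' ξ')) :
    i = i' ∧ j = j' ∧ ξ = ξ' := by
  rw [mk_eq_mk_iff] at h
  obtain ⟨c, hc⟩ := h
  have hck : ∀ k, (c : ℂ) * vv i' j' ξ' k = vv i j ξ k := fun k => by
    have := congrFun hc k
    simpa [Units.smul_def] using this
  have hi := hck i
  rw [show vv i j ξ i = 1 from by simp [vv]] at hi
  by_cases hii' : i = i'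
  · subst hii'
    have hc1 : (c : ℂ) = 1 := by simpa [vv] using hi
    have hj := hck j
    rw [hc1, one_mul, show vv i j ξ j = ξ from by simp [vv, hij.ne']] at hj
    by_cases hjj' : j = j'
    · subst hjj'
      exact ⟨rfl, rfl, by simpa [vv, hij.ne'] using hj.symm⟩
    · exfalso
      rw [show vv i j' ξ' j = 0 from by simp [vv, hij.ne', hjj']] at hj
      exact hξ hj.symm
  · exfalso
    by_cases hij'2 : i = j'
    · have hi' := hck i'
      rw [show vv i' j' ξ' i' = 1 from by simp [vv]] at hi'
      by_cases h1 : i' = i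
      · exact hii' h1.symm
      by_cases h2 : i' = j
      · have hji : j < i := by rw [h2, ← hij'2] at hij'; exact hij'
        exact lt_irrefl i (hij.trans hji)
      · rw [show vv i j ξ i' = 0 from by simp [vv, h1, h2]] at hi'
        rw [mul_one] at hi'
        exact Units.ne_zero c hi'
    · rw [show vv i' j' ξ' i = 0 from by simp [vv, hii', hij'2]] at hi
      rw [mul_zero] at hi
      exact zero_ne_one hi

end EckAux

/-- The Fermat cubic threefold has exactly 30 Eckardt points (points whose polar quadric
`∑ 3pᵢxᵢ²` has symmetric matrix of rank ≤ 2): the points with exactly two nonzero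
coordinates, equal to `1` (in position `i`) and `ξ` (in position `j > i`) with `ξ³ = -1`. -/
theorem stmt_5 :
    {x : Projectivization ℂ (Fin 5 → ℂ) | (∑ i, x.rep i ^ 3 = 0) ∧
        (Matrix.diagonal (fun i => 3 * x.rep i)).rank ≤ 2} =
      {x : Projectivization ℂ (Fin 5 → ℂ) |
        ∃ (v : Fin 5 → ℂ) (hv : v ≠ 0) (i j : Fin 5) (ξ : ℂ), i < j ∧ ξ ^ 3 = -1 ∧
          (v = fun k => if k = i then 1 else if k = j then ξ else 0) ∧
          x = Projectivization.mk ℂ v hv} ∧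
    {x : Projectivization ℂ (Fin 5 → ℂ) | (∑ i, x.rep i ^ 3 = 0) ∧
        (Matrix.diagonal (fun i => 3 * x.rep i)).rank ≤ 2}.ncard = 30 := by
  have hseteq : {x : Projectivization ℂ (Fin 5 → ℂ) | (∑ i, x.rep i ^ 3 = 0) ∧
        (Matrix.diagonal (fun i => 3 * x.rep i)).rank ≤ 2} =
      {x : Projectivization ℂ (Fin 5 → ℂ) |
        ∃ (v : Fin 5 → ℂ) (hv : v ≠ 0) (i j : Fin 5) (ξ : ℂ), i < j ∧ ξ ^ 3 = -1 ∧
          (v = fun k => if k = i then 1 else if k = j then ξ else 0) ∧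
          x = Projectivization.mk ℂ v hv} := by
    ext x
    simp only [Set.mem_setOf_eq]
    rw [key x]
    constructor
    · rintro ⟨i, j, ξ, hij, hξ, hx⟩
      exact ⟨vv i j ξ, vv_ne_zero i j ξ, i, j, ξ, hij, hξ, rfl, hx⟩
    · rintro ⟨v, hv, i, j, ξ, hij, hξ, rfl, hx⟩
      exact ⟨i, j, ξ, hij, hξ, hx⟩
  refine ⟨hseteq, ?_⟩
  -- finite model
  classical
  set pairsF : Finset (Fin 5 × Fin 5) := Finset.univ.filter (fun p => p.1 < p.2) with hpairs
  set rootsF : Finset ℂ := {-1, ra, rb} with hroots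
  set g : (Fin 5 × Fin 5) × ℂ → Projectivization ℂ (Fin 5 → ℂ) :=
    fun p => Projectivization.mk ℂ (vv p.1.1 p.1.2 p.2) (vv_ne_zero _ _ _) with hg
  have hset2 : {x : Projectivization ℂ (Fin 5 → ℂ) | (∑ i, x.rep i ^ 3 = 0) ∧
        (Matrix.diagonal (fun i => 3 * x.rep i)).rank ≤ 2} =
      ↑((pairsF ×ˢ rootsF).image g) := by
    ext x
    simp only [Set.mem_setOf_eq, key x, Finset.coe_image, Set.mem_image, Finset.mem_coe,
      Finset.mem_product, Finset.mem_filter, Finset.mem_univ, true_and, hpairs, hroots, hg]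
    constructor
    · rintro ⟨i, j, ξ, hij, hξ, hx⟩
      exact ⟨((i, j), ξ), ⟨hij, by simpa [mem_roots3] using (mem_roots3 ξ).mp hξ⟩, hx.symm⟩
    · rintro ⟨⟨⟨i, j⟩, ξ⟩, ⟨hij, hξ⟩, hx⟩
      refine ⟨i, j, ξ, hij, ?_, hx.symm⟩
      rw [mem_roots3]
      simpa using hξ
  rw [hset2, Set.ncard_coe_finset]
  have hinj : Set.InjOn g ↑(pairsF ×ˢ rootsF) := by
    rintro ⟨⟨i, j⟩, ξ⟩ hp ⟨⟨i', j'⟩, ξ'⟩ hq hpq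
    simp only [Finset.coe_product, Set.mem_prod, Finset.mem_coe, Finset.mem_filter,
      Finset.mem_univ, true_and, hpairs, hroots] at hp hq
    have hξ3 : ξ ^ 3 = -1 := (mem_roots3 ξ).mpr (by simpa using hp.2)
    have hξ'3 : ξ' ^ 3 = -1 := (mem_roots3 ξ').mpr (by simpa using hq.2)
    have hξ0 : ξ ≠ 0 := fun h => by rw [h] at hξ3; norm_num at hξ3
    have hξ'0 : ξ' ≠ 0 := fun h => by rw [h] at hξ'3; norm_num at hξ'3
    obtain ⟨h1, h2, h3⟩ := vv_inj hp.1 hq.1 hξ0 hξ'0 hpq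
    simp [h1, h2, h3]
  rw [Finset.card_image_of_injOn hinj, Finset.card_product]
  have hc1 : pairsF.card = 10 := by rw [hpairs]; decide
  have hc2 : rootsF.card = 3 := by
    rw [hroots]
    rw [Finset.card_insert_of_notMem (by simp [neg_one_ne_ra, neg_one_ne_rb]),
      Finset.card_insert_of_notMem (by simp [ra_ne_rb]), Finset.card_singleton]
  rw [hc1, hc2]
end

section
/- The cubic threefold {x₀²x₂ + x₂²x₄ + x₁²x₃ + x₃²x₀ + x₄³ = 0} ⊂ ℙ⁴ has exactly one Eckardt point, namely (0:1:0:0:0). -/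
lemma minor_det5 (A : Matrix (Fin 5) (Fin 5) ℂ) (h : A.rank ≤ 2) (f g : Fin 3 → Fin 5) :
    (A.submatrix f g).det = 0 := by
  by_contra hd
  have hu : IsUnit (A.submatrix f g) := (Matrix.isUnit_iff_isUnit_det _).mpr (Ne.isUnit hd)
  have h3 : (A.submatrix f g).rank = 3 := by simpa using Matrix.rank_of_isUnit _ hu
  have hfac : A.submatrix f g =
      ((1 : Matrix (Fin 5) (Fin 5) ℂ).submatrix f id) * A *
        ((1 : Matrix (Fin 5) (Fin 5) ℂ).submatrix id g) := by
    ext i j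
    simp [Matrix.mul_apply, Matrix.one_apply, Matrix.submatrix_apply]
  have hle : (A.submatrix f g).rank ≤ A.rank := by
    rw [hfac]
    exact le_trans (Matrix.rank_mul_le_left _ _) (Matrix.rank_mul_le_right _ _)
  omega

/-- The cubic threefold `x₀²x₂ + x₂²x₄ + x₁²x₃ + x₃²x₀ + x₄³ = 0` has exactly one
Eckardt point, namely `(0:1:0:0:0)` (Eckardt: the symmetric matrix of the polar
quadric `∑ pᵢ ∂f/∂xᵢ` has rank ≤ 2). -/
theorem stmt_7 (p : Fin 5 → ℂ) (hp : p ≠ 0) :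
    (p 0 ^ 2 * p 2 + p 2 ^ 2 * p 4 + p 1 ^ 2 * p 3 + p 3 ^ 2 * p 0 + p 4 ^ 3 = 0 ∧
      (!![p 2, 0, p 0, p 3, 0;
          0, p 3, 0, p 1, 0;
          p 0, 0, p 4, 0, p 2;
          p 3, p 1, 0, p 0, 0;
          0, 0, p 2, 0, 3 * p 4] : Matrix (Fin 5) (Fin 5) ℂ).rank ≤ 2) ↔
    ∃ t : ℂ, t ≠ 0 ∧ p = t • ![0, 1, 0, 0, 0] := by
  constructor
  · rintro ⟨hcub, hrk⟩
    have h := minor_det5 _ hrk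
    have m17 := h ![0,2,3] ![0,2,3]
    have m18 := h ![0,3,4] ![0,3,4]
    have m9 := h ![0,1,3] ![0,1,3]
    have m12 := h ![1,2,3] ![1,3,4]
    have m10 := h ![1,2,3] ![1,2,3]
    have m13 := h ![0,2,4] ![0,2,4]
    simp only [Matrix.det_fin_three] at m17 m18 m9 m12 m10 m13
    simp [Matrix.det_fin_three] at m17 m18 m9 m12 m10 m13
    have ha : p 0 = 0 := by
      have h3 : p 0 ^ 3 = 0 := by linear_combination m18 / 3 - m17
      exact pow_eq_zero_iff three_ne_zero |>.mp h3
    have hd : p 3 = 0 := by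
      have h3 : p 3 ^ 3 = 0 := by linear_combination -m9 - m12
      exact pow_eq_zero_iff three_ne_zero |>.mp h3
    by_cases hb : p 1 = 0
    · exfalso
      by_cases he : p 4 = 0
      · have hc : p 2 = 0 := by
          have h3 : p 2 ^ 3 = 0 := by
            linear_combination -m13 + (3 * p 2 * p 4) * he - (3 * p 0 ^ 2) * he
          exact pow_eq_zero_iff three_ne_zero |>.mp h3
        exact hp (funext fun i => by fin_cases i <;> assumption)
      · have hce : p 2 * p 4 ^ 3 = 0 := by
          linear_combination (p 4 / 4) * m13 + (p 2 / 4) * hcub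
            + ((3 * p 0 * p 4 ^ 2 - p 0 * p 2 ^ 2 - p 2 * p 3 ^ 2) / 4) * ha
            - (p 1 ^ 2 * p 2 / 4) * hd
        have hc : p 2 = 0 :=
          (mul_eq_zero.mp hce).resolve_right (pow_ne_zero 3 he)
        have h3 : p 4 ^ 3 = 0 := by
          linear_combination hcub - (p 0 * p 2 + p 3 ^ 2) * ha - (p 2 * p 4) * hc
            - (p 1 ^ 2) * hd
        exact he (pow_eq_zero_iff three_ne_zero |>.mp h3)
    · have hc : p 2 = 0 := by
        have h2 : p 1 ^ 2 * p 2 = 0 := by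
          linear_combination m12 + (p 2 * p 3) * ha
        exact (mul_eq_zero.mp h2).resolve_left (pow_ne_zero 2 hb)
      have he : p 4 = 0 := by
        have h2 : p 1 ^ 2 * p 4 = 0 := by
          linear_combination -m10 + (p 3 * p 4) * ha
        exact (mul_eq_zero.mp h2).resolve_left (pow_ne_zero 2 hb)
      refine ⟨p 1, hb, funext fun i => ?_⟩
      fin_cases i <;> simp [ha, hc, hd, he]
  · rintro ⟨t, ht, rfl⟩
    have e0 : (t • ![0, 1, 0, 0, 0] : Fin 5 → ℂ) 0 = 0 := by simp
    have e1 : (t • ![0, 1, 0, 0, 0] : Fin 5 → ℂ) 1 = t := by simp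
    have e2 : (t • ![0, 1, 0, 0, 0] : Fin 5 → ℂ) 2 = 0 := by simp
    have e3 : (t • ![0, 1, 0, 0, 0] : Fin 5 → ℂ) 3 = 0 := by simp
    have e4 : (t • ![0, 1, 0, 0, 0] : Fin 5 → ℂ) 4 = 0 := by simp
    rw [e0, e1, e2, e3, e4]
    refine ⟨by ring, ?_⟩
    have hfac : (!![(0:ℂ), 0, 0, 0, 0;
          0, 0, 0, t, 0;
          0, 0, 0, 0, 0;
          0, t, 0, 0, 0;
          0, 0, 0, 0, 3 * 0] : Matrix (Fin 5) (Fin 5) ℂ) =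
        (!![(0:ℂ), 0; t, 0; 0, 0; 0, t; 0, 0] : Matrix (Fin 5) (Fin 2) ℂ) *
        (!![(0:ℂ), 0, 0, 1, 0; 0, 1, 0, 0, 0] : Matrix (Fin 2) (Fin 5) ℂ) := by
      ext i j
      fin_cases i <;> fin_cases j <;>
        simp [Matrix.mul_apply, Fin.sum_univ_succ, Matrix.vecHead, Matrix.vecTail]
    rw [hfac]
    have hC := Matrix.rank_le_card_height
      (!![(0:ℂ), 0, 0, 1, 0; 0, 1, 0, 0, 0] : Matrix (Fin 2) (Fin 5) ℂ)
    simp only [Fintype.card_fin] at hC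
    exact le_trans (Matrix.rank_mul_le_right _ _) hC
end

section
/- The cubic threefold {x₀²x₄ + x₁²x₃ + x₃³ + x₃²x₄ + x₃x₄² − x₄³ + x₂³ = 0} ⊂ ℙ⁴ has exactly two Eckardt points, namely (1:0:0:0:0) and (0:1:0:0:0). -/
open Matrix

/-- picking any 3×3 submatrix of a rank ≤ 2 matrix gives det 0 -/
lemma det_sub_eq_zero {A : Matrix (Fin 5) (Fin 5) ℂ} (h : A.rank ≤ 2)
    (f g : Fin 3 → Fin 5) : (A.submatrix f g).det = 0 := by
  by_contra hd
  have hF : A.submatrix f g =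
      (Matrix.of fun i j => if f i = j then (1:ℂ) else 0) * A *
      (Matrix.of fun j k => if j = g k then (1:ℂ) else 0) := by
    ext i k
    simp [Matrix.mul_apply, Finset.sum_ite_eq, Finset.sum_ite_eq']
  have h3 : (A.submatrix f g).rank ≤ 2 := by
    rw [hF]
    calc _ ≤ ((Matrix.of fun i j => if f i = j then (1:ℂ) else 0) * A).rank :=
          Matrix.rank_mul_le_left _ _
      _ ≤ A.rank := Matrix.rank_mul_le_right _ _
      _ ≤ 2 := h
  have : (A.submatrix f g).rank = 3 := by
    have := Matrix.rank_of_isUnit (A.submatrix f g)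
      ((Matrix.isUnit_iff_isUnit_det _).mpr (Ne.isUnit hd))
    simpa using this
  omega

lemma cube_zero {x : ℂ} (h : x^3 = 0) : x = 0 := by
  exact pow_eq_zero_iff (by norm_num) |>.mp h

lemma sq_zero {x : ℂ} (h : x^2 = 0) : x = 0 := by
  exact pow_eq_zero_iff (by norm_num) |>.mp h

lemma key_s8 (a b c d e : ℂ)
    (hcubic : a^2*e + b^2*d + d^3 + d^2*e + d*e^2 - e^3 + c^3 = 0)
    (E1 : 3*c*(d*e) = 0)
    (E2 : 3*c*(d*(3*d+e) - b^2) = 0)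
    (E3 : 3*c*(e*(d-3*e) - a^2) = 0)
    (E4 : 3*c*((3*d+e)*(d-3*e) - (d+e)^2) = 0)
    (E6 : 3*c*(d*(d-3*e)) = 0)
    (F1 : e*(d*(3*d+e) - b^2) = 0)
    (F2 : a*(d*(3*d+e) - b^2) = 0)
    (F3 : d*(e*(d-3*e) - a^2) = 0)
    (F4 : d*((3*d+e)*(d-3*e)-(d+e)^2) - b^2*(d-3*e) = 0)
    (F5 : e*((3*d+e)*(d-3*e)-(d+e)^2) - a^2*(3*d+e) = 0)
    (F7 : e*(d*(d+e)) = 0) :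
    c = 0 ∧ d = 0 ∧ e = 0 ∧ (a = 0 ∨ b = 0) := by
  -- step 1: d = 0 ∧ e = 0 in the case c = 0
  have main : d = 0 ∧ e = 0 := by
    by_cases hc : c = 0
    · -- use the F equations
      have h3c : (3:ℂ) ≠ 0 := by norm_num
      rcases mul_eq_zero.mp F7 with he | hde
      · -- e = 0
        subst he
        constructor
        · by_contra hd
          have ha : a = 0 := by
            have h0 : d * a^2 = 0 := by linear_combination -F3
            rcases mul_eq_zero.mp h0 with h | h
            · exact absurd h hd
            · exact sq_zero h
          have hb2 : b^2 = 2*d^2 := by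
            have : d * (2*d^2 - b^2) = 0 := by linear_combination F4
            rcases mul_eq_zero.mp this with h | h
            · exact absurd h hd
            · linear_combination -h
          have : (3:ℂ)*d^3 = 0 := by
            subst hc ha; linear_combination hcubic - d*hb2
          exact hd (cube_zero (by linear_combination this/3))
        · rfl
      · rcases mul_eq_zero.mp hde with hd | hdpe
        · -- d = 0
          refine ⟨hd, ?_⟩
          subst hd
          by_contra he
          have hb : b = 0 := by
            have h0 : e * b^2 = 0 := by linear_combination -F1
            rcases mul_eq_zero.mp h0 with h | h
            · exact absurd h he
            · exact sq_zero h
          have ha2 : a^2 = -4*e^2 := by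
            have : e * (-4*e^2 - a^2) = 0 := by linear_combination F5
            rcases mul_eq_zero.mp this with h | h
            · exact absurd h he
            · linear_combination -h
          have : (-5:ℂ)*e^3 = 0 := by
            subst hc hb; linear_combination hcubic - e*ha2
          exact he (cube_zero (by linear_combination -this/5))
        · -- e = -d
          have he : e = -d := by linear_combination hdpe
          subst he
          by_cases hd : d = 0
          · exact ⟨hd, by rw [hd]; ring⟩
          exfalso
          have hb2 : b^2 = 2*d^2 := by
            have : (-d) * (2*d^2 - b^2) = 0 := by linear_combination F1
            rcases mul_eq_zero.mp this with h | h
            · exact absurd (show d = 0 by linear_combination -h) hd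
            · linear_combination -h
          have ha2 : a^2 = -4*d^2 := by
            have : d * (-4*d^2 - a^2) = 0 := by linear_combination F3
            rcases mul_eq_zero.mp this with h | h
            · exact absurd h hd
            · linear_combination -h
          have : (8:ℂ)*d^3 = 0 := by
            subst hc; linear_combination hcubic + d*ha2 - d*hb2
          exact hd (cube_zero (by linear_combination this/8))
    · -- c ≠ 0 : derive False
      exfalso
      have h3c : (3:ℂ)*c ≠ 0 := by
        simp [hc]
      have hde : d * e = 0 := by
        rcases mul_eq_zero.mp E1 with h | h
        · exact absurd h h3c
        · exact h
      have hde0 : d = 0 ∧ e = 0 := by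
        rcases mul_eq_zero.mp hde with hd | he
        · refine ⟨hd, ?_⟩
          subst hd
          have : (3*c) * (-4*e^2) = 0 := by linear_combination E4
          rcases mul_eq_zero.mp this with h | h
          · exact absurd h h3c
          · exact sq_zero (by linear_combination -h/4)
        · refine ⟨?_, he⟩
          subst he
          have : (3*c) * (d^2) = 0 := by linear_combination E6
          rcases mul_eq_zero.mp this with h | h
          · exact absurd h h3c
          · exact sq_zero h
      obtain ⟨hd, he⟩ := hde0
      subst hd; subst he
      have hb : b = 0 := by
        rcases mul_eq_zero.mp E2 with h | h
        · exact absurd h h3c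
        · exact sq_zero (by linear_combination -h)
      have ha : a = 0 := by
        rcases mul_eq_zero.mp E3 with h | h
        · exact absurd h h3c
        · exact sq_zero (by linear_combination -h)
      subst ha; subst hb
      exact hc (cube_zero (by linear_combination hcubic))
  obtain ⟨hd, he⟩ := main
  subst hd; subst he
  have hc : c = 0 := cube_zero (by linear_combination hcubic)
  refine ⟨hc, rfl, rfl, ?_⟩
  rcases mul_eq_zero.mp F2 with h | h
  · exact Or.inl h
  · exact Or.inr (sq_zero (by linear_combination -h))

lemma rank_le_two (A : Matrix (Fin 5) (Fin 5) ℂ) (B : Matrix (Fin 5) (Fin 2) ℂ)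
    (C : Matrix (Fin 2) (Fin 5) ℂ) (h : A = B * C) : A.rank ≤ 2 := by
  rw [h]
  exact le_trans (Matrix.rank_mul_le_left _ _) (by simpa using B.rank_le_card_width)

/-- The cubic threefold `x₀²x₄ + x₁²x₃ + x₃³ + x₃²x₄ + x₃x₄² − x₄³ + x₂³ = 0` has
exactly two Eckardt points, namely `(1:0:0:0:0)` and `(0:1:0:0:0)`. -/
theorem stmt_8 (p : Fin 5 → ℂ) (hp : p ≠ 0) :
    (p 0 ^ 2 * p 4 + p 1 ^ 2 * p 3 + p 3 ^ 3 + p 3 ^ 2 * p 4 + p 3 * p 4 ^ 2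
        - p 4 ^ 3 + p 2 ^ 3 = 0 ∧
      (!![p 4, 0, 0, 0, p 0;
          0, p 3, 0, p 1, 0;
          0, 0, 3 * p 2, 0, 0;
          0, p 1, 0, 3 * p 3 + p 4, p 3 + p 4;
          p 0, 0, 0, p 3 + p 4, p 3 - 3 * p 4] : Matrix (Fin 5) (Fin 5) ℂ).rank ≤ 2) ↔
    ((∃ t : ℂ, t ≠ 0 ∧ p = t • ![1, 0, 0, 0, 0]) ∨
     (∃ t : ℂ, t ≠ 0 ∧ p = t • ![0, 1, 0, 0, 0])) := by
  constructor
  · rintro ⟨hcubic, hrank⟩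
    have E1 : 3*(p 2)*((p 3)*(p 4)) = 0 := by
      have := det_sub_eq_zero hrank ![0,1,2] ![0,1,2]
      rw [Matrix.det_fin_three] at this
      simp [Matrix.det_fin_three, -mul_eq_zero, Matrix.vecHead, Matrix.vecTail] at this
      linear_combination this
    have E2 : 3*(p 2)*((p 3)*(3*(p 3)+(p 4)) - (p 1)^2) = 0 := by
      have := det_sub_eq_zero hrank ![1,2,3] ![1,2,3]
      rw [Matrix.det_fin_three] at this
      simp [Matrix.det_fin_three, -mul_eq_zero, Matrix.vecHead, Matrix.vecTail] at this
      linear_combination this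
    have E3 : 3*(p 2)*((p 4)*((p 3)-3*(p 4)) - (p 0)^2) = 0 := by
      have := det_sub_eq_zero hrank ![0,2,4] ![0,2,4]
      rw [Matrix.det_fin_three] at this
      simp [Matrix.det_fin_three, -mul_eq_zero, Matrix.vecHead, Matrix.vecTail] at this
      linear_combination this
    have E4 : 3*(p 2)*((3*(p 3)+(p 4))*((p 3)-3*(p 4)) - ((p 3)+(p 4))^2) = 0 := by
      have := det_sub_eq_zero hrank ![2,3,4] ![2,3,4]
      rw [Matrix.det_fin_three] at this
      simp [Matrix.det_fin_three, -mul_eq_zero, Matrix.vecHead, Matrix.vecTail] at this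
      linear_combination this
    have E6 : 3*(p 2)*((p 3)*((p 3)-3*(p 4))) = 0 := by
      have := det_sub_eq_zero hrank ![1,2,4] ![1,2,4]
      rw [Matrix.det_fin_three] at this
      simp [Matrix.det_fin_three, -mul_eq_zero, Matrix.vecHead, Matrix.vecTail] at this
      linear_combination this
    have F1 : (p 4)*((p 3)*(3*(p 3)+(p 4)) - (p 1)^2) = 0 := by
      have := det_sub_eq_zero hrank ![0,1,3] ![0,1,3]
      rw [Matrix.det_fin_three] at this
      simp [Matrix.det_fin_three, -mul_eq_zero, Matrix.vecHead, Matrix.vecTail] at this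
      linear_combination this
    have F2 : (p 0)*((p 3)*(3*(p 3)+(p 4)) - (p 1)^2) = 0 := by
      have := det_sub_eq_zero hrank ![0,1,3] ![1,3,4]
      rw [Matrix.det_fin_three] at this
      simp [Matrix.det_fin_three, -mul_eq_zero, Matrix.vecHead, Matrix.vecTail] at this
      linear_combination this
    have F3 : (p 3)*((p 4)*((p 3)-3*(p 4)) - (p 0)^2) = 0 := by
      have := det_sub_eq_zero hrank ![0,1,4] ![0,1,4]
      rw [Matrix.det_fin_three] at this
      simp [Matrix.det_fin_three, -mul_eq_zero, Matrix.vecHead, Matrix.vecTail] at this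
      linear_combination this
    have F4 : (p 3)*((3*(p 3)+(p 4))*((p 3)-3*(p 4))-((p 3)+(p 4))^2) - (p 1)^2*((p 3)-3*(p 4)) = 0 := by
      have := det_sub_eq_zero hrank ![1,3,4] ![1,3,4]
      rw [Matrix.det_fin_three] at this
      simp [Matrix.det_fin_three, -mul_eq_zero, Matrix.vecHead, Matrix.vecTail] at this
      linear_combination this
    have F5 : (p 4)*((3*(p 3)+(p 4))*((p 3)-3*(p 4))-((p 3)+(p 4))^2) - (p 0)^2*(3*(p 3)+(p 4)) = 0 := by
      have := det_sub_eq_zero hrank ![0,3,4] ![0,3,4]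
      rw [Matrix.det_fin_three] at this
      simp [Matrix.det_fin_three, -mul_eq_zero, Matrix.vecHead, Matrix.vecTail] at this
      linear_combination this
    have F7 : (p 4)*((p 3)*((p 3)+(p 4))) = 0 := by
      have := det_sub_eq_zero hrank ![0,1,3] ![0,1,4]
      rw [Matrix.det_fin_three] at this
      simp [Matrix.det_fin_three, -mul_eq_zero, Matrix.vecHead, Matrix.vecTail] at this
      linear_combination this
    obtain ⟨hc, hd, he, hab⟩ :=
      key_s8 (p 0) (p 1) (p 2) (p 3) (p 4) hcubic E1 E2 E3 E4 E6 F1 F2 F3 F4 F5 F7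
    rcases hab with ha | hb
    · right
      refine ⟨p 1, ?_, ?_⟩
      · intro hb
        apply hp
        funext i
        fin_cases i <;> simpa using by assumption
      · funext i
        fin_cases i <;> simp [ha, hc, hd, he]
    · left
      refine ⟨p 0, ?_, ?_⟩
      · intro ha
        apply hp
        funext i
        fin_cases i <;> simpa using by assumption
      · funext i
        fin_cases i <;> simp [hb, hc, hd, he]
  · rintro (⟨t, ht, rfl⟩ | ⟨t, ht, rfl⟩)
    · have e0 : (t • ![(1:ℂ),0,0,0,0]) 0 = t := by simp
      have e1 : (t • ![(1:ℂ),0,0,0,0]) 1 = 0 := by simp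
      have e2 : (t • ![(1:ℂ),0,0,0,0]) 2 = 0 := by simp
      have e3 : (t • ![(1:ℂ),0,0,0,0]) 3 = 0 := by simp
      have e4 : (t • ![(1:ℂ),0,0,0,0]) 4 = 0 := by simp
      rw [e0, e1, e2, e3, e4]
      refine ⟨by ring, ?_⟩
      apply rank_le_two _ !![t,0;0,0;0,0;0,0;0,t] !![0,0,0,0,1;1,0,0,0,0]
      ext i j
      fin_cases i <;> fin_cases j <;>
        simp [Matrix.mul_apply, Fin.sum_univ_succ, Matrix.vecHead, Matrix.vecTail]
    · have e0 : (t • ![(0:ℂ),1,0,0,0]) 0 = 0 := by simp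
      have e1 : (t • ![(0:ℂ),1,0,0,0]) 1 = t := by simp
      have e2 : (t • ![(0:ℂ),1,0,0,0]) 2 = 0 := by simp
      have e3 : (t • ![(0:ℂ),1,0,0,0]) 3 = 0 := by simp
      have e4 : (t • ![(0:ℂ),1,0,0,0]) 4 = 0 := by simp
      rw [e0, e1, e2, e3, e4]
      refine ⟨by ring, ?_⟩
      apply rank_le_two _ !![0,0;t,0;0,0;0,t;0,0] !![0,0,0,1,0;0,1,0,0,0]
      ext i j
      fin_cases i <;> fin_cases j <;>
        simp [Matrix.mul_apply, Fin.sum_univ_succ, Matrix.vecHead, Matrix.vecTail]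
end

section
/- The cubic threefold X₅ = {x₀²x₂ + x₁²x₃ + x₁x₂² + x₀x₃² + x₁x₃² + x₄³ = 0} ⊂ ℙ⁴ is smooth and has no Eckardt points, yet contains the triple line ℓ = {x₂ = x₃ = x₄ = 0}: the plane {x₂ = x₃ = 0} meets X₅ in 3ℓ. -/
private lemma minor3_zero {A : Matrix (Fin 5) (Fin 5) ℂ} (h : A.rank ≤ 2)
    (r c : Fin 3 → Fin 5) : (A.submatrix r c).det = 0 := by
  by_contra hd
  have hu : IsUnit (A.submatrix r c) :=
    (Matrix.isUnit_iff_isUnit_det _).2 (isUnit_iff_ne_zero.2 hd)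
  have h3 : (A.submatrix r c).rank = 3 := by
    simpa using Matrix.rank_of_isUnit _ hu
  have hP : A.submatrix r c =
      (Matrix.of fun (i : Fin 3) (k : Fin 5) => if r i = k then (1:ℂ) else 0) *
      (A * Matrix.of fun (k : Fin 5) (j : Fin 3) => if k = c j then (1:ℂ) else 0) := by
    ext i j
    simp [Matrix.mul_apply, Matrix.submatrix_apply, ite_mul, mul_ite,
      Finset.sum_ite_eq, Finset.sum_ite_eq']
  have hle : (A.submatrix r c).rank ≤ A.rank := by
    rw [hP]
    exact le_trans (Matrix.rank_mul_le_right _ _) (Matrix.rank_mul_le_left _ _)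
  omega

/-- The cubic threefold `X₅ = {x₀²x₂ + x₁²x₃ + x₁x₂² + x₀x₃² + x₁x₃² + x₄³ = 0}` is
smooth, has no Eckardt points (every point of it has polar quadric of rank ≥ 3), yet
contains the triple line `ℓ = {x₂ = x₃ = x₄ = 0}`: the plane `{x₂ = x₃ = 0}` meets it
in `3ℓ`. -/
theorem stmt_16 (f : (Fin 5 → ℂ) → ℂ)
    (hf : ∀ x : Fin 5 → ℂ, f x = x 0 ^ 2 * x 2 + x 1 ^ 2 * x 3 + x 1 * x 2 ^ 2
        + x 0 * x 3 ^ 2 + x 1 * x 3 ^ 2 + x 4 ^ 3) :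
    (∀ x : Fin 5 → ℂ,
        2 * x 0 * x 2 + x 3 ^ 2 = 0 →
        2 * x 1 * x 3 + x 2 ^ 2 + x 3 ^ 2 = 0 →
        x 0 ^ 2 + 2 * x 1 * x 2 = 0 →
        x 1 ^ 2 + 2 * x 0 * x 3 + 2 * x 1 * x 3 = 0 →
        3 * x 4 ^ 2 = 0 → x = 0) ∧
    (∀ p : Fin 5 → ℂ, p ≠ 0 → f p = 0 →
      ¬ (!![p 2, 0, p 0, p 3, 0;
            0, p 3, p 2, p 1 + p 3, 0;
            p 0, p 2, p 1, 0, 0;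
            p 3, p 1 + p 3, 0, p 0 + p 1, 0;
            0, 0, 0, 0, 3 * p 4] : Matrix (Fin 5) (Fin 5) ℂ).rank ≤ 2) ∧
    (∀ t0 t1 : ℂ, f ![t0, t1, 0, 0, 0] = 0) ∧
    (∀ t0 t1 t2 : ℂ, f ![t0, t1, 0, 0, t2] = t2 ^ 3) := by
  refine ⟨?_, ?_, ?_, ?_⟩
  · intro x h0 h1 h2 h3 h4
    have hp0 : x 0 = 0 := by
      have hpow : x 0 ^ 5 = 0 := by
        linear_combination (((1600) / 10143) * x 0 * x 2 ^ 2 + ((1000) / 3381) * x 0 * x 1 * x 3 + ((-640) / 3381) * x 0 * x 1 * x 2 + ((-1000) / 10143) * x 0 ^ 2 * x 3 + ((-160) / 10143) * x 0 ^ 2 * x 2 + ((-10768) / 10143) * x 0 ^ 2 * x 1 + ((-1024) / 10143) * x 0 ^ 3) * h0 + (((1000) / 10143) * x 0 * x 1 * x 3 + ((-640) / 10143) * x 0 * x 1 * x 2 + ((5000) / 10143) * x 0 ^ 2 * x 3 + ((-3200) / 10143) * x 0 ^ 2 * x 2 + ((-256) / 10143) * x 0 ^ 2 * x 1) * h1 +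 (((800) / 10143) * x 2 * x 3 ^ 2 + ((400) / 10143) * x 1 * x 2 * x 3 + ((2000) / 10143) * x 0 * x 2 * x 3 + ((320) / 10143) * x 0 * x 2 ^ 2 + ((-1000) / 3381) * x 0 * x 1 * x 3 + ((1250) / 10143) * x 0 * x 1 * x 2 + ((-500) / 3381) * x 0 * x 1 ^ 2 + ((-1000) / 3381) * x 0 ^ 2 * x 3 + ((2048) / 10143) * x 0 ^ 2 * x 2 + (1) * x 0 ^ 3) * h2 + (((-800) / 10143) * x 2 ^ 2 * x 3 + ((-2000) / 10143) * x 0 * x 3 ^ 2 + ((1280) / 10143) * x 0 * x 2 * x 3 + ((-2500) / 10143) * x 0 * x 2 ^ 2 + ((1000) / 3381) * x 0 * x 1 * x 2 + ((512) / 10143) * x 0 ^ 2 * x 3 + ((500) / 3381) * x 0 ^ 3) * h3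
      exact pow_eq_zero_iff (by norm_num) |>.mp hpow
    have hp1 : x 1 = 0 := by
      have hpow : x 1 ^ 3 = 0 := by
        linear_combination (((-4) / 3) * x 0) * h0 + (((-4) / 3) * x 1) * h1 + (((2) / 3) * x 2) * h2 + (((2) / 3) * x 3 + (1) * x 1 + (-1) * x 0) * h3 + ((1) * x 1 ^ 2 + (2) * x 0 * x 3 + (2) * x 0 * x 2) * hp0
      exact pow_eq_zero_iff (by norm_num) |>.mp hpow
    have hp2 : x 2 = 0 := by
      have hpow : x 2 ^ 2 = 0 := by
        linear_combination ((-1)) * h0 + ((1)) * h1 + ((-1)) * h3 + ((2) * x 3 + (2) * x 2) * hp0 + ((1) * x 1) * hp1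
      exact pow_eq_zero_iff (by norm_num) |>.mp hpow
    have hp3 : x 3 = 0 := by
      have hpow : x 3 ^ 2 = 0 := by
        linear_combination ((1)) * h0 + ((-2) * x 2) * hp0
      exact pow_eq_zero_iff (by norm_num) |>.mp hpow
    have hp4 : x 4 = 0 := by
      have hpow : x 4 ^ 2 = 0 := by
        linear_combination (((1) / 3)) * h4
      exact pow_eq_zero_iff (by norm_num) |>.mp hpow
    funext i
    fin_cases i <;> simpa using ‹_›
  · intro p hp hfp hrank
    rw [hf] at hfp
    have hF := hfp
    have hm0 : ((-1) * p 2 ^ 3 + (1) * p 1 * p 2 * p 3 + (-1) * p 0 ^ 2 * p 3) = 0 := by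
      have h := minor3_zero hrank ![0, 1, 2] ![0, 1, 2]
      rw [Matrix.det_fin_three] at h
      simp only [Matrix.submatrix_apply, Matrix.cons_val', Matrix.cons_val_zero, Matrix.cons_val_one, Matrix.head_cons, Matrix.empty_val', Matrix.cons_val_fin_one, Matrix.head_fin_const, Matrix.cons_val_two, Matrix.tail_cons, Matrix.cons_val_three, Matrix.cons_val_four, Matrix.of_apply] at h
      linear_combination h
    have hm1 : ((-1) * p 2 ^ 2 * p 3 + (-1) * p 1 * p 2 ^ 2 + (-1) * p 0 * p 3 ^ 2) = 0 := by
      have h := minor3_zero hrank ![0, 1, 2] ![0, 1, 3]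
      rw [Matrix.det_fin_three] at h
      simp only [Matrix.submatrix_apply, Matrix.cons_val', Matrix.cons_val_zero, Matrix.cons_val_one, Matrix.head_cons, Matrix.empty_val', Matrix.cons_val_fin_one, Matrix.head_fin_const, Matrix.cons_val_two, Matrix.tail_cons, Matrix.cons_val_three, Matrix.cons_val_four, Matrix.of_apply] at h
      linear_combination h
    have hm2 : ((-1) * p 1 * p 2 * p 3 + (-1) * p 1 ^ 2 * p 2 + (-1) * p 0 * p 2 * p 3 + (1) * p 0 ^ 2 * p 3 + (1) * p 0 ^ 2 * p 1) = 0 := by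
      have h := minor3_zero hrank ![0, 1, 2] ![0, 2, 3]
      rw [Matrix.det_fin_three] at h
      simp only [Matrix.submatrix_apply, Matrix.cons_val', Matrix.cons_val_zero, Matrix.cons_val_one, Matrix.head_cons, Matrix.empty_val', Matrix.cons_val_fin_one, Matrix.head_fin_const, Matrix.cons_val_two, Matrix.tail_cons, Matrix.cons_val_three, Matrix.cons_val_four, Matrix.of_apply] at h
      linear_combination h
    have hm3 : ((-1) * p 2 ^ 2 * p 3 + (1) * p 1 * p 3 ^ 2 + (1) * p 0 * p 2 * p 3 + (1) * p 0 * p 1 * p 2) = 0 := by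
      have h := minor3_zero hrank ![0, 1, 2] ![1, 2, 3]
      rw [Matrix.det_fin_three] at h
      simp only [Matrix.submatrix_apply, Matrix.cons_val', Matrix.cons_val_zero, Matrix.cons_val_one, Matrix.head_cons, Matrix.empty_val', Matrix.cons_val_fin_one, Matrix.head_fin_const, Matrix.cons_val_two, Matrix.tail_cons, Matrix.cons_val_three, Matrix.cons_val_four, Matrix.of_apply] at h
      linear_combination h
    have hm4 : ((-1) * p 3 ^ 3 + (-1) * p 2 * p 3 ^ 2 + (-1) * p 1 * p 2 * p 3 + (-1) * p 1 ^ 2 * p 2 + (1) * p 0 * p 2 * p 3) = 0 := by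
      have h := minor3_zero hrank ![0, 1, 3] ![0, 1, 3]
      rw [Matrix.det_fin_three] at h
      simp only [Matrix.submatrix_apply, Matrix.cons_val', Matrix.cons_val_zero, Matrix.cons_val_one, Matrix.head_cons, Matrix.empty_val', Matrix.cons_val_fin_one, Matrix.head_fin_const, Matrix.cons_val_two, Matrix.tail_cons, Matrix.cons_val_three, Matrix.cons_val_four, Matrix.of_apply] at h
      linear_combination h
    have hm5 : ((-1) * p 2 * p 3 ^ 2 + (1) * p 1 * p 2 ^ 2 + (1) * p 0 * p 3 ^ 2 + (1) * p 0 * p 2 ^ 2 + (1) * p 0 * p 1 * p 3) = 0 := by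
      have h := minor3_zero hrank ![0, 1, 3] ![0, 2, 3]
      rw [Matrix.det_fin_three] at h
      simp only [Matrix.submatrix_apply, Matrix.cons_val', Matrix.cons_val_zero, Matrix.cons_val_one, Matrix.head_cons, Matrix.empty_val', Matrix.cons_val_fin_one, Matrix.head_fin_const, Matrix.cons_val_two, Matrix.tail_cons, Matrix.cons_val_three, Matrix.cons_val_four, Matrix.of_apply] at h
      linear_combination h
    have hm6 : ((-1) * p 2 * p 3 ^ 2 + (-1) * p 1 * p 2 * p 3 + (1) * p 0 * p 3 ^ 2 + (1) * p 0 * p 1 * p 3 + (1) * p 0 * p 1 ^ 2 + (-1) * p 0 ^ 2 * p 3) = 0 := by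
      have h := minor3_zero hrank ![0, 1, 3] ![1, 2, 3]
      rw [Matrix.det_fin_three] at h
      simp only [Matrix.submatrix_apply, Matrix.cons_val', Matrix.cons_val_zero, Matrix.cons_val_one, Matrix.head_cons, Matrix.empty_val', Matrix.cons_val_fin_one, Matrix.head_fin_const, Matrix.cons_val_two, Matrix.tail_cons, Matrix.cons_val_three, Matrix.cons_val_four, Matrix.of_apply] at h
      linear_combination h
    have hm9 : ((3) * p 2 * p 3 * p 4 + (3) * p 1 * p 2 * p 4) = 0 := by
      have h := minor3_zero hrank ![0, 1, 4] ![0, 3, 4]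
      rw [Matrix.det_fin_three] at h
      simp only [Matrix.submatrix_apply, Matrix.cons_val', Matrix.cons_val_zero, Matrix.cons_val_one, Matrix.head_cons, Matrix.empty_val', Matrix.cons_val_fin_one, Matrix.head_fin_const, Matrix.cons_val_two, Matrix.tail_cons, Matrix.cons_val_three, Matrix.cons_val_four, Matrix.of_apply] at h
      linear_combination h
    have hm10 : ((-3) * p 0 * p 3 * p 4) = 0 := by
      have h := minor3_zero hrank ![0, 1, 4] ![1, 2, 4]
      rw [Matrix.det_fin_three] at h
      simp only [Matrix.submatrix_apply, Matrix.cons_val', Matrix.cons_val_zero, Matrix.cons_val_one, Matrix.head_cons, Matrix.empty_val', Matrix.cons_val_fin_one, Matrix.head_fin_const, Matrix.cons_val_two, Matrix.tail_cons, Matrix.cons_val_three, Matrix.cons_val_four, Matrix.of_apply] at h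
      linear_combination h
    have hm13 : ((-1) * p 1 * p 3 ^ 2 + (1) * p 1 ^ 2 * p 2 + (1) * p 0 * p 1 * p 2 + (-1) * p 0 ^ 2 * p 1 + (-1) * p 0 ^ 3) = 0 := by
      have h := minor3_zero hrank ![0, 2, 3] ![0, 2, 3]
      rw [Matrix.det_fin_three] at h
      simp only [Matrix.submatrix_apply, Matrix.cons_val', Matrix.cons_val_zero, Matrix.cons_val_one, Matrix.head_cons, Matrix.empty_val', Matrix.cons_val_fin_one, Matrix.head_fin_const, Matrix.cons_val_two, Matrix.tail_cons, Matrix.cons_val_three, Matrix.cons_val_four, Matrix.of_apply] at h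
      linear_combination h
    have hm14 : ((-1) * p 1 * p 3 ^ 2 + (-1) * p 1 ^ 2 * p 3 + (-1) * p 0 * p 1 * p 2 + (-1) * p 0 ^ 2 * p 2) = 0 := by
      have h := minor3_zero hrank ![0, 2, 3] ![1, 2, 3]
      rw [Matrix.det_fin_three] at h
      simp only [Matrix.submatrix_apply, Matrix.cons_val', Matrix.cons_val_zero, Matrix.cons_val_one, Matrix.head_cons, Matrix.empty_val', Matrix.cons_val_fin_one, Matrix.head_fin_const, Matrix.cons_val_two, Matrix.tail_cons, Matrix.cons_val_three, Matrix.cons_val_four, Matrix.of_apply] at h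
      linear_combination h
    have hm15 : ((3) * p 1 * p 2 * p 4 + (-3) * p 0 ^ 2 * p 4) = 0 := by
      have h := minor3_zero hrank ![0, 2, 4] ![0, 2, 4]
      rw [Matrix.det_fin_three] at h
      simp only [Matrix.submatrix_apply, Matrix.cons_val', Matrix.cons_val_zero, Matrix.cons_val_one, Matrix.head_cons, Matrix.empty_val', Matrix.cons_val_fin_one, Matrix.head_fin_const, Matrix.cons_val_two, Matrix.tail_cons, Matrix.cons_val_three, Matrix.cons_val_four, Matrix.of_apply] at h
      linear_combination h
    have hm16 : ((-3) * p 0 * p 2 * p 4) = 0 := by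
      have h := minor3_zero hrank ![0, 2, 4] ![1, 2, 4]
      rw [Matrix.det_fin_three] at h
      simp only [Matrix.submatrix_apply, Matrix.cons_val', Matrix.cons_val_zero, Matrix.cons_val_one, Matrix.head_cons, Matrix.empty_val', Matrix.cons_val_fin_one, Matrix.head_fin_const, Matrix.cons_val_two, Matrix.tail_cons, Matrix.cons_val_three, Matrix.cons_val_four, Matrix.of_apply] at h
      linear_combination h
    have hm17 : ((-3) * p 1 * p 3 * p 4) = 0 := by
      have h := minor3_zero hrank ![0, 2, 4] ![2, 3, 4]
      rw [Matrix.det_fin_three] at h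
      simp only [Matrix.submatrix_apply, Matrix.cons_val', Matrix.cons_val_zero, Matrix.cons_val_one, Matrix.head_cons, Matrix.empty_val', Matrix.cons_val_fin_one, Matrix.head_fin_const, Matrix.cons_val_two, Matrix.tail_cons, Matrix.cons_val_three, Matrix.cons_val_four, Matrix.of_apply] at h
      linear_combination h
    have hm20 : ((-3) * p 3 ^ 2 * p 4 + (-3) * p 1 * p 3 * p 4) = 0 := by
      have h := minor3_zero hrank ![0, 3, 4] ![1, 3, 4]
      rw [Matrix.det_fin_three] at h
      simp only [Matrix.submatrix_apply, Matrix.cons_val', Matrix.cons_val_zero, Matrix.cons_val_one, Matrix.head_cons, Matrix.empty_val', Matrix.cons_val_fin_one, Matrix.head_fin_const, Matrix.cons_val_two, Matrix.tail_cons, Matrix.cons_val_three, Matrix.cons_val_four, Matrix.of_apply] at h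
      linear_combination h
    have hm21 : ((3) * p 0 * p 1 * p 4 + (3) * p 0 ^ 2 * p 4) = 0 := by
      have h := minor3_zero hrank ![0, 3, 4] ![2, 3, 4]
      rw [Matrix.det_fin_three] at h
      simp only [Matrix.submatrix_apply, Matrix.cons_val', Matrix.cons_val_zero, Matrix.cons_val_one, Matrix.head_cons, Matrix.empty_val', Matrix.cons_val_fin_one, Matrix.head_fin_const, Matrix.cons_val_two, Matrix.tail_cons, Matrix.cons_val_three, Matrix.cons_val_four, Matrix.of_apply] at h
      linear_combination h
    have hm22 : ((-1) * p 1 * p 3 ^ 2 + (-1) * p 1 * p 2 ^ 2 + (-1) * p 1 ^ 2 * p 3 + (-1) * p 1 ^ 3 + (-1) * p 0 * p 2 ^ 2 + (1) * p 0 * p 1 * p 3) = 0 := by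
      have h := minor3_zero hrank ![1, 2, 3] ![1, 2, 3]
      rw [Matrix.det_fin_three] at h
      simp only [Matrix.submatrix_apply, Matrix.cons_val', Matrix.cons_val_zero, Matrix.cons_val_one, Matrix.head_cons, Matrix.empty_val', Matrix.cons_val_fin_one, Matrix.head_fin_const, Matrix.cons_val_two, Matrix.tail_cons, Matrix.cons_val_three, Matrix.cons_val_four, Matrix.of_apply] at h
      linear_combination h
    have hm23 : ((-3) * p 2 ^ 2 * p 4 + (3) * p 1 * p 3 * p 4) = 0 := by
      have h := minor3_zero hrank ![1, 2, 4] ![1, 2, 4]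
      rw [Matrix.det_fin_three] at h
      simp only [Matrix.submatrix_apply, Matrix.cons_val', Matrix.cons_val_zero, Matrix.cons_val_one, Matrix.head_cons, Matrix.empty_val', Matrix.cons_val_fin_one, Matrix.head_fin_const, Matrix.cons_val_two, Matrix.tail_cons, Matrix.cons_val_three, Matrix.cons_val_four, Matrix.of_apply] at h
      linear_combination h
    have hm24 : ((-3) * p 1 * p 3 * p 4 + (-3) * p 1 ^ 2 * p 4) = 0 := by
      have h := minor3_zero hrank ![1, 2, 4] ![2, 3, 4]
      rw [Matrix.det_fin_three] at h
      simp only [Matrix.submatrix_apply, Matrix.cons_val', Matrix.cons_val_zero, Matrix.cons_val_one, Matrix.head_cons, Matrix.empty_val', Matrix.cons_val_fin_one, Matrix.head_fin_const, Matrix.cons_val_two, Matrix.tail_cons, Matrix.cons_val_three, Matrix.cons_val_four, Matrix.of_apply] at h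
      linear_combination h
    have hm25 : ((-3) * p 3 ^ 2 * p 4 + (-3) * p 1 * p 3 * p 4 + (-3) * p 1 ^ 2 * p 4 + (3) * p 0 * p 3 * p 4) = 0 := by
      have h := minor3_zero hrank ![1, 3, 4] ![1, 3, 4]
      rw [Matrix.det_fin_three] at h
      simp only [Matrix.submatrix_apply, Matrix.cons_val', Matrix.cons_val_zero, Matrix.cons_val_one, Matrix.head_cons, Matrix.empty_val', Matrix.cons_val_fin_one, Matrix.head_fin_const, Matrix.cons_val_two, Matrix.tail_cons, Matrix.cons_val_three, Matrix.cons_val_four, Matrix.of_apply] at h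
      linear_combination h
    have hm27 : ((3) * p 1 ^ 2 * p 4 + (3) * p 0 * p 1 * p 4) = 0 := by
      have h := minor3_zero hrank ![2, 3, 4] ![2, 3, 4]
      rw [Matrix.det_fin_three] at h
      simp only [Matrix.submatrix_apply, Matrix.cons_val', Matrix.cons_val_zero, Matrix.cons_val_one, Matrix.head_cons, Matrix.empty_val', Matrix.cons_val_fin_one, Matrix.head_fin_const, Matrix.cons_val_two, Matrix.tail_cons, Matrix.cons_val_three, Matrix.cons_val_four, Matrix.of_apply] at h
      linear_combination h
    have hq0 : p 0 = 0 := by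
      have hpow : p 0 ^ 5 = 0 := by
        linear_combination (((-109) / 95) * p 1 * p 3 + ((-74) / 95) * p 1 * p 2 + ((-66) / 95) * p 1 ^ 2 + ((3) / 38) * p 0 * p 1 + ((-74) / 95) * p 0 ^ 2) * hm0 + (((-161) / 190) * p 1 * p 3 + ((-139) / 190) * p 1 ^ 2 + ((-74) / 95) * p 0 * p 3 + ((81) / 95) * p 0 * p 1 + ((-169) / 190) * p 0 ^ 2) * hm1 + (((-41) / 38) * p 3 ^ 2 + ((-321) / 190) * p 1 * p 3 + ((1) / 190) * p 1 ^ 2 + ((-3) / 38) * p 0 * p 3 + ((7) / 95) * p 0 * p 1 + ((21) / 95) * p 0 ^ 2) * hm2 + (((-6) / 95) * p 1 ^ 2 + ((6) / 19) * p 0 * p 1 + ((-49) / 190) * p 0 ^ 2) * hm3 + (((-13) / 190) * p 1 * p 3 + ((-29) / 190) * p 1 ^ 2 + ((-13) / 190) * p 0 * p 3 + ((219) / 190) * p 0 * p 1 + ((17) / 190) * p 0 ^ 2) * hm4 + (((-49) / 95) * p 1 ^ 2 + ((217) / 190) * p 0 * p 1 + ((-203) / 190) * p 0 ^ 2) * hm5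 + (((49) / 95) * p 1 ^ 2 + ((-217) / 190) * p 0 * p 1 + (1) * p 0 ^ 2) * hm6 + (((109) / 285) * p 4 ^ 2) * hm9 + (((-49) / 190) * p 4 ^ 2) * hm10 + (((-14) / 95) * p 1 ^ 2 + ((116) / 95) * p 0 * p 1 + (-1) * p 0 ^ 2) * hm13 + (((-41) / 190) * p 1 ^ 2 + ((43) / 190) * p 0 * p 1 + ((-141) / 190) * p 0 ^ 2) * hm14 + (((-43) / 285) * p 4 ^ 2) * hm15 + (((1) / 38) * p 4 ^ 2) * hm16 + (((-9) / 38) * p 4 ^ 2) * hm17 + (((104) / 285) * p 4 ^ 2) * hm20 + (((11) / 114) * p 4 ^ 2) * hm21 + (((49) / 95) * p 0 * p 1 + ((-94) / 95) * p 0 ^ 2) * hm22 + (((-74) / 285) * p 4 ^ 2) * hm23 + (((-8) / 285) * p 4 ^ 2) * hm24 + (((-221) / 570) * p 4 ^ 2) * hm25 + (((-98) / 285) * p 4 ^ 2) * hm27 + (((-13) / 190) * p 3 ^ 2 + ((-109) / 95) * p 2 * p 3 + ((-74) / 95) * p 2 ^ 2 + ((-8) / 95) * p 1 * p 3 + ((-66)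 / 95) * p 1 * p 2 + ((-41) / 190) * p 1 ^ 2 + ((37) / 95) * p 0 * p 3 + ((3) / 38) * p 0 * p 2 + ((141) / 190) * p 0 * p 1 + ((-141) / 190) * p 0 ^ 2) * hF
      exact pow_eq_zero_iff (by norm_num) |>.mp hpow
    have hq1 : p 1 = 0 := by
      have hpow : p 1 ^ 3 = 0 := by
        linear_combination (((1) / 2)) * hm1 + (((-1) / 2)) * hm2 + (((-1) / 2)) * hm3 + (((-1) / 2)) * hm5 + (((1) / 2)) * hm6 + (((-1) / 2)) * hm13 + ((1)) * hm14 + ((-1)) * hm22 + (((1) / 2) * p 3 ^ 2 + ((-1) / 2) * p 2 ^ 2 + (1) * p 1 * p 3 + (2) * p 1 * p 2 + ((-1) / 2) * p 1 ^ 2 + (1) * p 0 * p 3 + (1) * p 0 * p 2 + ((-1) / 2) * p 0 ^ 2) * hq0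
      exact pow_eq_zero_iff (by norm_num) |>.mp hpow
    have hq2 : p 2 = 0 := by
      have hpow : p 2 ^ 3 = 0 := by
        linear_combination ((-1)) * hm0 + ((-1)) * hm2 + ((-1) * p 2 * p 3 + (1) * p 0 * p 1) * hq0 + ((-1) * p 1 * p 2) * hq1
      exact pow_eq_zero_iff (by norm_num) |>.mp hpow
    have hq3 : p 3 = 0 := by
      have hpow : p 3 ^ 3 = 0 := by
        linear_combination ((1)) * hm2 + ((-1)) * hm4 + ((1)) * hm5 + ((-1) * p 3 ^ 2 + (2) * p 2 * p 3 + (-1) * p 2 ^ 2 + (-1) * p 1 * p 3 + (-1) * p 0 * p 3 + (-1) * p 0 * p 1) * hq0 + ((-1) * p 2 ^ 2) * hq1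
      exact pow_eq_zero_iff (by norm_num) |>.mp hpow
    have hq4 : p 4 = 0 := by
      have hpow : p 4 ^ 3 = 0 := by
        linear_combination ((1)) * hm13 + ((1)) * hF + ((-1) * p 3 ^ 2 + (-1) * p 1 * p 2 + (-1) * p 0 * p 2 + (1) * p 0 * p 1 + (1) * p 0 ^ 2) * hq0 + ((-1) * p 2 ^ 2 + (-1) * p 1 * p 3 + (-1) * p 1 * p 2) * hq1
      exact pow_eq_zero_iff (by norm_num) |>.mp hpow
    exact hp (funext fun i => by fin_cases i <;> simpa using ‹_›)
  · intro t0 t1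
    rw [hf]
    simp
  · intro t0 t1 t2
    rw [hf]
    simp
end

section
/- A smooth cubic hypersurface X ⊂ ℙ⁴ over ℂ contains no 2-plane: if f is a cubic form in x₀,...,x₄ vanishing identically on a 3-dimensional linear subspace of ℂ⁵, then f has a singular point on that subspace, i.e. a nonzero point where all partial derivatives of f vanish. -/
open MvPolynomial


open Polynomial in
/-- A nontrivial zero of a binary quartic form given by a function with two
polynomial representations (dehomogenizations at y=1 and x=1). -/
lemma quartic_root (g : ℂ → ℂ → ℂ) (p phat : Polynomial ℂ)
    (hp : ∀ t, p.eval t = g t 1) (hphat : ∀ t, phat.eval t = g 1 t)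
    (hh : ∀ s x y, g (s*x) (s*y) = s^4 * g x y) :
    ∃ x y : ℂ, ¬(x = 0 ∧ y = 0) ∧ g x y = 0 := by
  by_cases hdeg : 0 < p.degree
  · obtain ⟨t, ht⟩ := Complex.exists_root hdeg
    exact ⟨t, 1, by simp, by rw [← hp]; exact ht⟩
  · have hpc : p = Polynomial.C (p.coeff 0) :=
      Polynomial.eq_C_of_degree_le_zero (le_of_not_gt hdeg)
    have h4 : phat = Polynomial.C (p.coeff 0) * Polynomial.X ^ 4 := by
      apply Polynomial.eq_of_infinite_eval_eq
      apply Set.Infinite.mono (s := {t : ℂ | t ≠ 0})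
      · intro t ht
        simp only [Set.mem_setOf_eq] at ht ⊢
        have key : g 1 t = t ^ 4 * g t⁻¹ 1 := by
          have := hh t t⁻¹ 1
          rw [mul_inv_cancel₀ ht, mul_one] at this
          exact this
        rw [hphat t, key, ← hp t⁻¹, hpc]
        rw [Polynomial.eval_C, Polynomial.eval_mul, Polynomial.eval_C,
          Polynomial.eval_pow, Polynomial.eval_X, Polynomial.coeff_C_zero]
        ring
      · exact Set.Infinite.mono (fun x hx => hx) ((Set.finite_singleton (0:ℂ)).infinite_compl)
    refine ⟨1, 0, by simp, ?_⟩
    have := hphat 0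
    rw [h4] at this
    simpa using this.symm

/-- Two conics in the projective plane over ℂ have a common point
(version assuming the first has nonzero `z²` coefficient). -/
lemma quad_pair_aux (a1 b1 c1 d1 e1 f1 a2 b2 c2 d2 e2 f2 : ℂ) (hc1 : c1 ≠ 0) :
    ∃ x y z : ℂ, ¬(x = 0 ∧ y = 0 ∧ z = 0) ∧
      a1*x^2 + b1*y^2 + c1*z^2 + d1*x*y + e1*x*z + f1*y*z = 0 ∧
      a2*x^2 + b2*y^2 + c2*z^2 + d2*x*y + e2*x*z + f2*y*z = 0 := by
  classical
  -- the resultant (in z) of the two conics, a binary quartic form in (x, y)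
  set g : ℂ → ℂ → ℂ := fun x y =>
    (c1*(a2*x^2+d2*x*y+b2*y^2) - (a1*x^2+d1*x*y+b1*y^2)*c2)^2
      - (c1*(e2*x+f2*y) - (e1*x+f1*y)*c2)
        * ((e1*x+f1*y)*(a2*x^2+d2*x*y+b2*y^2) - (a1*x^2+d1*x*y+b1*y^2)*(e2*x+f2*y))
    with hg
  obtain ⟨x0, y0, hxy0, hR⟩ : ∃ x y : ℂ, ¬(x = 0 ∧ y = 0) ∧ g x y = 0 := by
    apply quartic_root g
      ((Polynomial.C c1*(Polynomial.C a2*Polynomial.X^2+Polynomial.C d2*Polynomial.X+Polynomial.C b2)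
          - (Polynomial.C a1*Polynomial.X^2+Polynomial.C d1*Polynomial.X+Polynomial.C b1)*Polynomial.C c2)^2
        - (Polynomial.C c1*(Polynomial.C e2*Polynomial.X+Polynomial.C f2)
            - (Polynomial.C e1*Polynomial.X+Polynomial.C f1)*Polynomial.C c2)
          * ((Polynomial.C e1*Polynomial.X+Polynomial.C f1)*(Polynomial.C a2*Polynomial.X^2+Polynomial.C d2*Polynomial.X+Polynomial.C b2)
              - (Polynomial.C a1*Polynomial.X^2+Polynomial.C d1*Polynomial.X+Polynomial.C b1)*(Polynomial.C e2*Polynomial.X+Polynomial.C f2)))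
      ((Polynomial.C c1*(Polynomial.C a2+Polynomial.C d2*Polynomial.X+Polynomial.C b2*Polynomial.X^2)
          - (Polynomial.C a1+Polynomial.C d1*Polynomial.X+Polynomial.C b1*Polynomial.X^2)*Polynomial.C c2)^2
        - (Polynomial.C c1*(Polynomial.C e2+Polynomial.C f2*Polynomial.X)
            - (Polynomial.C e1+Polynomial.C f1*Polynomial.X)*Polynomial.C c2)
          * ((Polynomial.C e1+Polynomial.C f1*Polynomial.X)*(Polynomial.C a2+Polynomial.C d2*Polynomial.X+Polynomial.C b2*Polynomial.X^2)
              - (Polynomial.C a1+Polynomial.C d1*Polynomial.X+Polynomial.C b1*Polynomial.X^2)*(Polynomial.C e2+Polynomial.C f2*Polynomial.X)))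
    · intro t
      simp only [hg, Polynomial.eval_add, Polynomial.eval_sub, Polynomial.eval_mul,
        Polynomial.eval_pow, Polynomial.eval_C, Polynomial.eval_X]
      ring
    · intro t
      simp only [hg, Polynomial.eval_add, Polynomial.eval_sub, Polynomial.eval_mul,
        Polynomial.eval_pow, Polynomial.eval_C, Polynomial.eval_X]
      ring
    · intro s x y
      simp only [hg]
      ring
  simp only [hg] at hR
  set Bv := e1*x0+f1*y0 with hBv
  set Cv := a1*x0^2+d1*x0*y0+b1*y0^2 with hCv
  set Ev := e2*x0+f2*y0 with hEv
  set Fv := a2*x0^2+d2*x0*y0+b2*y0^2 with hFv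
  have hR' : (c1*Fv - Cv*c2)^2 - (c1*Ev - Bv*c2)*(Bv*Fv - Cv*Ev) = 0 := by
    rw [hBv, hCv, hEv, hFv]; linear_combination hR
  obtain ⟨s, hs'⟩ := IsAlgClosed.exists_pow_nat_eq (Bv^2 - 4*c1*Cv) zero_lt_two
  set r1 : ℂ := (-Bv + s)/(2*c1) with hr1
  set r2 : ℂ := (-Bv - s)/(2*c1) with hr2
  have hB' : Bv = -(c1*(r1+r2)) := by rw [hr1, hr2]; field_simp; ring
  have hC' : Cv = c1*(r1*r2) := by
    rw [hr1, hr2, div_mul_div_comm,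
      show (-Bv + s) * (-Bv - s) = Bv^2 - s^2 by ring, hs']
    field_simp
    ring
  have hfac : (c1*Fv - Cv*c2)^2 - (c1*Ev - Bv*c2)*(Bv*Fv - Cv*Ev)
      = c1^2 * (c2*r1^2 + Ev*r1 + Fv) * (c2*r2^2 + Ev*r2 + Fv) := by
    rw [hB', hC']; ring
  rw [hR'] at hfac
  have hprod : (c2*r1^2 + Ev*r1 + Fv) = 0 ∨ (c2*r2^2 + Ev*r2 + Fv) = 0 := by
    rcases mul_eq_zero.mp hfac.symm with h | h
    · rcases mul_eq_zero.mp h with h' | h'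
      · exact absurd h' (pow_ne_zero _ hc1)
      · exact Or.inl h'
    · exact Or.inr h
  have hq1 : ∀ r, c1*r^2 + Bv*r + Cv = c1*(r - r1)*(r - r2) := by
    intro r; rw [hB', hC']; ring
  rcases hprod with h | h
  · refine ⟨x0, y0, r1, ?_, ?_, ?_⟩
    · rintro ⟨hx, hy, -⟩; exact hxy0 ⟨hx, hy⟩
    · have := hq1 r1
      rw [hBv, hCv] at this
      linear_combination this
    · rw [hEv, hFv] at h
      linear_combination h
  · refine ⟨x0, y0, r2, ?_, ?_, ?_⟩
    · rintro ⟨hx, hy, -⟩; exact hxy0 ⟨hx, hy⟩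
    · have := hq1 r2
      rw [hBv, hCv] at this
      linear_combination this
    · rw [hEv, hFv] at h
      linear_combination h



lemma degree_eq_sum_univ {σ : Type*} [Fintype σ] (d : σ →₀ ℕ) :
    d.degree = ∑ i, d i :=
  Finset.sum_subset (Finset.subset_univ _)
    (fun x _ hx => Finsupp.notMem_support_iff.mp hx)

lemma degree_two_structure {σ : Type*} [Fintype σ] [DecidableEq σ] (d : σ → ℕ)
    (h : ∑ i, d i = 2) :
    ∃ i k, ∀ j, d j = (if j = i then 1 else 0) + (if j = k then 1 else 0) := by
  obtain ⟨i, hi⟩ : ∃ i, 0 < d i := by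
    by_contra hc
    push_neg at hc
    have : ∑ i, d i = 0 := Finset.sum_eq_zero (fun i _ => Nat.le_zero.mp (hc i))
    omega
  have hde : ∀ j, d j = (d j - (if j = i then 1 else 0)) + (if j = i then 1 else 0) := by
    intro j
    split
    · next hji => subst hji; omega
    · omega
  set e : σ → ℕ := fun j => d j - (if j = i then 1 else 0) with he
  have hde' : ∀ j, d j = e j + (if j = i then 1 else 0) := hde
  have hesum : ∑ j, e j = 1 := by
    have h1 : ∑ j, d j = (∑ j, e j) + ∑ j, (if j = i then 1 else 0) := by
      rw [← Finset.sum_add_distrib]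
      exact Finset.sum_congr rfl (fun j _ => hde' j)
    have h2 : ∑ j, (if j = i then 1 else 0) = 1 := by simp
    omega
  obtain ⟨k, hk⟩ : ∃ k, 0 < e k := by
    by_contra hc
    push_neg at hc
    have : ∑ j, e j = 0 := Finset.sum_eq_zero (fun j _ => Nat.le_zero.mp (hc j))
    omega
  have hek : ∀ j, e j = (if j = k then 1 else 0) := by
    intro j
    by_cases hj : j = k
    · subst hj
      rw [if_pos rfl]
      have : e j ≤ ∑ m, e m := Finset.single_le_sum (fun m _ => Nat.zero_le _)
        (Finset.mem_univ j)
      omega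
    · rw [if_neg hj]
      have hsub : ({j, k} : Finset σ) ⊆ Finset.univ := Finset.subset_univ _
      have : e j + e k ≤ ∑ m, e m := by
        rw [← Finset.sum_pair hj]
        exact Finset.sum_le_sum_of_subset hsub
      omega
  exact ⟨i, k, fun j => by rw [hde' j, hek j]; ring⟩

lemma prod_pow_indicator {σ : Type*} [Fintype σ] [DecidableEq σ] (u : σ → ℂ) (i : σ) :
    (∏ j, u j ^ (if j = i then 1 else 0)) = u i := by
  rw [Finset.prod_congr rfl (g := fun j => if j = i then u j else 1)
    (fun j _ => by by_cases hj : j = i <;> simp [hj])]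
  simp

/-- The quadratic-form expansion of a partial derivative of a cubic form. -/
lemma pderiv_quad (f : MvPolynomial (Fin 5) ℂ) (hf : f.IsHomogeneous 3) (j : Fin 5) :
    ∃ M : Fin 5 → Fin 5 → ℂ, ∀ u : Fin 5 → ℂ,
      eval u (pderiv j f) = ∑ i, ∑ k, M i k * u i * u k := by
  classical
  have hmem : f ∈ AddMonoidAlgebra.supported ℂ ℂ { d : Fin 5 →₀ ℕ | d.degree = 3 } := by
    rw [← homogeneousSubmodule_eq_finsupp_supported]
    exact (mem_homogeneousSubmodule 3 f).mpr hf
  clear hf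
  rw [AddMonoidAlgebra.supported_eq_span_single] at hmem
  induction hmem using Submodule.span_induction with
  | mem g hg =>
    obtain ⟨d, hd, rfl⟩ := hg
    simp only [Set.mem_setOf_eq] at hd
    have hsm : ((fun i => AddMonoidAlgebra.single i (1:ℂ)) d) = monomial d 1 := single_eq_monomial d 1
    rw [hsm, pderiv_monomial]
    by_cases hdj : d j = 0
    · refine ⟨0, fun u => ?_⟩
      simp [hdj]
    · have hdsum : ∑ i, d i = 3 := by rw [← degree_eq_sum_univ]; exact hd
      have hdj1 : 1 ≤ d j := Nat.one_le_iff_ne_zero.mpr hdj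
      set e := d - Finsupp.single j 1 with hedef
      have heval : ∀ i, e i = d i - (if i = j then 1 else 0) := by
        intro i
        simp [hedef, Finsupp.tsub_apply, Finsupp.single_apply, eq_comm]
      have hesum : ∑ i, e i = 2 := by
        have h1 : ∀ i, e i + (if i = j then 1 else 0) = d i := by
          intro i
          rw [heval i]
          by_cases hij : i = j
          · subst hij; simp; omega
          · simp [hij]
        have h2 : ∑ i, (e i + (if i = j then 1 else 0)) = 3 := by
          rw [Finset.sum_congr rfl (fun i _ => h1 i)]; exact hdsum
        rw [Finset.sum_add_distrib] at h2
        simp at h2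
        omega
      obtain ⟨i0, k0, hik⟩ := degree_two_structure (fun i => e i) hesum
      refine ⟨fun i k => if i = i0 ∧ k = k0 then ((d j : ℂ) * 1) else 0, fun u => ?_⟩
      rw [eval_monomial]
      have hprod : (e.prod fun i n => u i ^ n) = u i0 * u k0 := by
        rw [Finsupp.prod_pow]
        rw [Finset.prod_congr rfl (g := fun i =>
          u i ^ (if i = i0 then 1 else 0) * u i ^ (if i = k0 then 1 else 0))
          (fun i _ => by rw [hik i, pow_add])]
        rw [Finset.prod_mul_distrib, prod_pow_indicator, prod_pow_indicator]
      rw [hprod]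
      rw [Finset.sum_eq_single i0 ?h1 ?h2]
      · rw [Finset.sum_eq_single k0 ?h3 ?h4]
        · simp; ring
        · intro k _ hk; simp [hk]
        · intro h; exact absurd (Finset.mem_univ k0) h
      · intro i _ hi
        apply Finset.sum_eq_zero
        intro k _
        simp [hi]
      · intro h; exact absurd (Finset.mem_univ i0) h
  | zero => exact ⟨0, fun u => by simp⟩
  | add g₁ g₂ _ _ ih₁ ih₂ =>
    obtain ⟨M₁, hM₁⟩ := ih₁
    obtain ⟨M₂, hM₂⟩ := ih₂
    refine ⟨fun i k => M₁ i k + M₂ i k, fun u => ?_⟩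
    rw [map_add, map_add, hM₁, hM₂, ← Finset.sum_add_distrib]
    apply Finset.sum_congr rfl
    intro i _
    rw [← Finset.sum_add_distrib]
    apply Finset.sum_congr rfl
    intro k _
    ring
  | smul c g _ ih =>
    obtain ⟨M, hM⟩ := ih
    refine ⟨fun i k => c * M i k, fun u => ?_⟩
    rw [smul_eq_C_mul, pderiv_C_mul, eval_mul, eval_C, hM, Finset.mul_sum]
    apply Finset.sum_congr rfl
    intro i _
    rw [Finset.mul_sum]
    apply Finset.sum_congr rfl
    intro k _
    ring

lemma quad_subst (M : Fin 5 → Fin 5 → ℂ) (a b c : Fin 5 → ℂ) (x y z : ℂ) :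
    ∑ i, ∑ k, M i k * (x*a i + y*b i + z*c i) * (x*a k + y*b k + z*c k)
      = (∑ i, ∑ k, M i k * a i * a k) * x^2 + (∑ i, ∑ k, M i k * b i * b k) * y^2
        + (∑ i, ∑ k, M i k * c i * c k) * z^2
        + (∑ i, ∑ k, (M i k * a i * b k + M i k * b i * a k)) * (x*y)
        + (∑ i, ∑ k, (M i k * a i * c k + M i k * c i * a k)) * (x*z)
        + (∑ i, ∑ k, (M i k * b i * c k + M i k * c i * b k)) * (y*z) := by
  simp only [Finset.sum_mul, ← Finset.sum_add_distrib]
  apply Finset.sum_congr rfl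
  intro i _
  apply Finset.sum_congr rfl
  intro k _
  ring



/-- Directional derivative of a polynomial vanishing along a line. -/
lemma directional (f : MvPolynomial (Fin 5) ℂ) (v w : Fin 5 → ℂ)
    (h : ∀ t : ℂ, eval (fun i => v i + t * w i) f = 0) :
    ∑ i, w i * eval v (pderiv i f) = 0 := by
  classical
  set ψ : MvPolynomial (Fin 5) ℂ →+* Polynomial ℂ :=
    eval₂Hom Polynomial.C (fun i => Polynomial.C (v i) + Polynomial.C (w i) * Polynomial.X)
    with hψ
  have claim_eval : ∀ (t : ℂ) (g : MvPolynomial (Fin 5) ℂ),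
      Polynomial.eval t (ψ g) = eval (fun i => v i + t * w i) g := by
    intro t g
    have hcomp : (Polynomial.evalRingHom t).comp ψ
        = (eval (fun i => v i + t * w i) : MvPolynomial (Fin 5) ℂ →+* ℂ) := by
      apply MvPolynomial.ringHom_ext
      · intro a; simp [hψ]
      · intro i; simp [hψ]; ring
    exact congrArg (fun F => F g) hcomp
  have claim_zero : ψ f = 0 := by
    apply Polynomial.funext
    intro t
    rw [claim_eval t f, h t]
    simp
  have claim_deriv : ∀ g : MvPolynomial (Fin 5) ℂ,
      Polynomial.derivative (ψ g) = ∑ i, ψ (pderiv i g) * Polynomial.C (w i) := by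
    intro g
    induction g using MvPolynomial.induction_on with
    | C a => simp [hψ]
    | add p q hp hq =>
      simp only [map_add, hp, hq, add_mul, ← Finset.sum_add_distrib]
    | mul_X p i hp =>
      have hXi : ψ (X i) = Polynomial.C (v i) + Polynomial.C (w i) * Polynomial.X := by
        simp [hψ]
      rw [map_mul, hXi, Polynomial.derivative_mul, hp]
      have hder : Polynomial.derivative
          (Polynomial.C (v i) + Polynomial.C (w i) * Polynomial.X) = Polynomial.C (w i) := by
        simp
      rw [hder]
      have hrhs : ∀ j, ψ (pderiv j (p * X i)) * Polynomial.C (w j)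
          = ψ (pderiv j p) * Polynomial.C (w j)
              * (Polynomial.C (v i) + Polynomial.C (w i) * Polynomial.X)
            + (if j = i then ψ p * Polynomial.C (w i) else 0) := by
        intro j
        rw [pderiv_mul, map_add, map_mul, map_mul, hXi, add_mul]
        congr 1
        · ring
        · rcases eq_or_ne j i with rfl | hj
          · rw [if_pos rfl, pderiv_X_self, map_one, mul_one]
          · rw [if_neg hj, pderiv_X_of_ne hj.symm, map_zero, mul_zero, zero_mul]
      rw [Finset.sum_congr rfl (fun j _ => hrhs j), Finset.sum_add_distrib,
        ← Finset.sum_mul, Finset.sum_ite_eq' Finset.univ i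
          (fun _ => ψ p * Polynomial.C (w i))]
      simp
  have hd0 : (Finset.univ : Finset (Fin 5)).sum
      (fun i => ψ (pderiv i f) * Polynomial.C (w i)) = 0 := by
    rw [← claim_deriv, claim_zero]
    simp
  have := congrArg (Polynomial.eval 0) hd0
  rw [Polynomial.eval_finset_sum] at this
  simp only [Polynomial.eval_mul, Polynomial.eval_C, Polynomial.eval_zero] at this
  rw [← this]
  apply Finset.sum_congr rfl
  intro i _
  rw [claim_eval 0 (pderiv i f)]
  have : (fun j => v j + 0 * w j) = v := by funext j; ring
  rw [this]
  ring

lemma sum_single_mul (u : Fin 5 → ℂ) (j : Fin 5) :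
    ∑ i, (Pi.single j 1 : Fin 5 → ℂ) i * u i = u j := by
  rw [Finset.sum_congr rfl (fun i _ => by
    rw [Pi.single_apply, ite_mul, one_mul, zero_mul])]
  rw [Finset.sum_ite_eq' Finset.univ j u]
  simp

/-- Two conics in the complex projective plane always meet. -/
lemma quad_pair (a1 b1 c1 d1 e1 f1 a2 b2 c2 d2 e2 f2 : ℂ) :
    ∃ x y z : ℂ, ¬(x = 0 ∧ y = 0 ∧ z = 0) ∧
      a1*x^2 + b1*y^2 + c1*z^2 + d1*x*y + e1*x*z + f1*y*z = 0 ∧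
      a2*x^2 + b2*y^2 + c2*z^2 + d2*x*y + e2*x*z + f2*y*z = 0 := by
  by_cases hc1 : c1 = 0
  · by_cases hc2 : c2 = 0
    · refine ⟨0, 0, 1, by simp, ?_, ?_⟩ <;> simp [hc1, hc2]
    · obtain ⟨x, y, z, h0, h2, h1⟩ := quad_pair_aux a2 b2 c2 d2 e2 f2 a1 b1 c1 d1 e1 f1 hc2
      exact ⟨x, y, z, h0, h1, h2⟩
  · exact quad_pair_aux a1 b1 c1 d1 e1 f1 a2 b2 c2 d2 e2 f2 hc1

/-- A smooth cubic hypersurface in ℙ⁴ contains no 2-plane: if a cubic form `f` in five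
variables vanishes identically on a 3-dimensional linear subspace of ℂ⁵, then `f` has a
singular point on that subspace. -/
theorem stmt_18 (f : MvPolynomial (Fin 5) ℂ) (hf : f.IsHomogeneous 3)
    (W : Submodule ℂ (Fin 5 → ℂ)) (hW : Module.finrank ℂ W = 3)
    (hvan : ∀ v ∈ W, eval v f = 0) :
    ∃ v ∈ W, v ≠ 0 ∧ ∀ i, eval v (pderiv i f) = 0 := by
  classical
  -- a basis of W, as vectors of ℂ⁵
  let b : Module.Basis (Fin 3) ℂ W := Module.finBasisOfFinrankEq ℂ W hW
  set w : Fin 3 → (Fin 5 → ℂ) := fun i => (b i : Fin 5 → ℂ) with hwdef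
  have hwW : ∀ i, w i ∈ W := fun i => (b i).2
  have hwli : LinearIndependent ℂ w :=
    b.linearIndependent.map' W.subtype (Submodule.ker_subtype W)
  -- two coordinate vectors complementing W
  have hfd : FiniteDimensional ℂ (Fin 5 → ℂ) := inferInstance
  have hsingle_span : Submodule.span ℂ (Set.range fun i : Fin 5 => (Pi.single i 1 : Fin 5 → ℂ))
      = ⊤ := by
    have h1 := (Pi.basisFun ℂ (Fin 5)).span_eq
    have heq : (Set.range fun i : Fin 5 => (Pi.single i 1 : Fin 5 → ℂ))
        = Set.range (Pi.basisFun ℂ (Fin 5)) :=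
      congrArg Set.range (funext fun i => (Pi.basisFun_apply ℂ (Fin 5) i).symm)
    rw [heq]
    exact h1
  obtain ⟨a, ha⟩ : ∃ a : Fin 5, (Pi.single a 1 : Fin 5 → ℂ) ∉ W := by
    by_contra hc
    push_neg at hc
    have : (⊤ : Submodule ℂ (Fin 5 → ℂ)) ≤ W := by
      rw [← hsingle_span]
      rw [Submodule.span_le]
      rintro - ⟨i, rfl⟩
      exact hc i
    have hWtop : W = ⊤ := top_le_iff.mp this
    rw [hWtop] at hW
    rw [finrank_top] at hW
    simp [Module.finrank_pi] at hW
  set W' : Submodule ℂ (Fin 5 → ℂ) := W ⊔ Submodule.span ℂ {Pi.single a 1} with hW'def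
  have hWW' : W < W' := by
    refine lt_of_le_of_ne le_sup_left (fun h => ha ?_)
    rw [h]
    exact Submodule.mem_sup_right (Submodule.mem_span_singleton_self _)
  obtain ⟨a2, ha2⟩ : ∃ a2 : Fin 5, (Pi.single a2 1 : Fin 5 → ℂ) ∉ W' := by
    by_contra hc
    push_neg at hc
    have htop : (⊤ : Submodule ℂ (Fin 5 → ℂ)) ≤ W' := by
      rw [← hsingle_span, Submodule.span_le]
      rintro - ⟨i, rfl⟩
      exact hc i
    have h5 : Module.finrank ℂ W' = 5 := by
      rw [top_le_iff.mp htop, finrank_top]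
      simp [Module.finrank_pi]
    have h4 : Module.finrank ℂ W' ≤ 4 := by
      have hsum := Submodule.finrank_sup_add_finrank_inf_eq W
        (Submodule.span ℂ {(Pi.single a 1 : Fin 5 → ℂ)})
      have hone : Module.finrank ℂ (Submodule.span ℂ {(Pi.single a 1 : Fin 5 → ℂ)}) = 1 := by
        apply finrank_span_singleton
        intro h0
        apply ha
        rw [h0]
        exact W.zero_mem
      rw [hW, hone] at hsum
      rw [hW'def]
      omega
    omega
  set W'' : Submodule ℂ (Fin 5 → ℂ) := W' ⊔ Submodule.span ℂ {Pi.single a2 1} with hW''def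
  have hW'W'' : W' < W'' := by
    refine lt_of_le_of_ne le_sup_left (fun h => ha2 ?_)
    rw [h]
    exact Submodule.mem_sup_right (Submodule.mem_span_singleton_self _)
  have hW''top : W'' = ⊤ := by
    apply Submodule.eq_top_of_finrank_eq
    have h1 : Module.finrank ℂ W < Module.finrank ℂ W' :=
      Submodule.finrank_lt_finrank_of_lt hWW'
    have h2 : Module.finrank ℂ W' < Module.finrank ℂ W'' :=
      Submodule.finrank_lt_finrank_of_lt hW'W''
    have h3 : Module.finrank ℂ W'' ≤ Module.finrank ℂ (Fin 5 → ℂ) := Submodule.finrank_le _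
    have h4 : Module.finrank ℂ (Fin 5 → ℂ) = 5 := by simp [Module.finrank_pi]
    omega
  -- the two partial derivatives as quadratic forms
  obtain ⟨M, hM⟩ := pderiv_quad f hf a
  obtain ⟨N, hN⟩ := pderiv_quad f hf a2
  -- find a common zero of the two conics on W
  obtain ⟨x, y, z, hxyz, hQ1, hQ2⟩ := quad_pair
    (∑ i, ∑ k, M i k * w 0 i * w 0 k) (∑ i, ∑ k, M i k * w 1 i * w 1 k)
    (∑ i, ∑ k, M i k * w 2 i * w 2 k)
    (∑ i, ∑ k, (M i k * w 0 i * w 1 k + M i k * w 1 i * w 0 k))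
    (∑ i, ∑ k, (M i k * w 0 i * w 2 k + M i k * w 2 i * w 0 k))
    (∑ i, ∑ k, (M i k * w 1 i * w 2 k + M i k * w 2 i * w 1 k))
    (∑ i, ∑ k, N i k * w 0 i * w 0 k) (∑ i, ∑ k, N i k * w 1 i * w 1 k)
    (∑ i, ∑ k, N i k * w 2 i * w 2 k)
    (∑ i, ∑ k, (N i k * w 0 i * w 1 k + N i k * w 1 i * w 0 k))
    (∑ i, ∑ k, (N i k * w 0 i * w 2 k + N i k * w 2 i * w 0 k))
    (∑ i, ∑ k, (N i k * w 1 i * w 2 k + N i k * w 2 i * w 1 k))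
  set v : Fin 5 → ℂ := x • w 0 + y • w 1 + z • w 2 with hvdef
  have hvW : v ∈ W := W.add_mem (W.add_mem (W.smul_mem x (hwW 0)) (W.smul_mem y (hwW 1)))
    (W.smul_mem z (hwW 2))
  have hvcoord : ∀ i, v i = x * w 0 i + y * w 1 i + z * w 2 i := by
    intro i
    simp [hvdef, Pi.add_apply, Pi.smul_apply, smul_eq_mul]
  have hvne : v ≠ 0 := by
    intro hv0
    have hcomb : ∑ i : Fin 3, (![x, y, z]) i • w i = 0 := by
      rw [Fin.sum_univ_three]
      simpa [hvdef] using hv0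
    have := Fintype.linearIndependent_iff.mp hwli ![x, y, z] hcomb
    exact hxyz ⟨this 0, this 1, this 2⟩
  -- the gradient at v kills the two coordinate vectors
  have heva : eval v (pderiv a f) = 0 := by
    rw [hM v]
    rw [Finset.sum_congr rfl (fun i _ => Finset.sum_congr rfl (fun k _ => by
      rw [hvcoord i, hvcoord k]))]
    rw [quad_subst M (w 0) (w 1) (w 2) x y z]
    linear_combination hQ1
  have heva2 : eval v (pderiv a2 f) = 0 := by
    rw [hN v]
    rw [Finset.sum_congr rfl (fun i _ => Finset.sum_congr rfl (fun k _ => by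
      rw [hvcoord i, hvcoord k]))]
    rw [quad_subst N (w 0) (w 1) (w 2) x y z]
    linear_combination hQ2
  -- the gradient at v kills W
  have hgradW : ∀ u ∈ W, ∑ i, u i * eval v (pderiv i f) = 0 := by
    intro u hu
    apply directional f v u
    intro t
    have hmem : (fun i => v i + t * u i) = v + t • u := by
      funext i
      simp [Pi.add_apply, Pi.smul_apply, smul_eq_mul]
    rw [hmem]
    exact hvan _ (W.add_mem hvW (W.smul_mem t hu))
  -- the gradient functional
  set L : (Fin 5 → ℂ) →ₗ[ℂ] ℂ :=
    { toFun := fun u => ∑ i, u i * eval v (pderiv i f)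
      map_add' := by
        intro u1 u2
        rw [← Finset.sum_add_distrib]
        apply Finset.sum_congr rfl
        intro i _
        simp [Pi.add_apply]
        ring
      map_smul' := by
        intro c u
        simp only [Pi.smul_apply, smul_eq_mul, RingHom.id_apply]
        rw [Finset.mul_sum]
        apply Finset.sum_congr rfl
        intro i _
        ring } with hLdef
  have hkill : W'' ≤ LinearMap.ker L := by
    rw [hW''def, hW'def]
    apply sup_le
    apply sup_le
    · intro u hu
      rw [LinearMap.mem_ker]
      exact hgradW u hu
    · rw [Submodule.span_le, Set.singleton_subset_iff]
      rw [SetLike.mem_coe, LinearMap.mem_ker]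
      show ∑ i, (Pi.single a 1 : Fin 5 → ℂ) i * eval v (pderiv i f) = 0
      rw [sum_single_mul (fun i => eval v (pderiv i f)) a]
      exact heva
    · rw [Submodule.span_le, Set.singleton_subset_iff]
      rw [SetLike.mem_coe, LinearMap.mem_ker]
      show ∑ i, (Pi.single a2 1 : Fin 5 → ℂ) i * eval v (pderiv i f) = 0
      rw [sum_single_mul (fun i => eval v (pderiv i f)) a2]
      exact heva2
  have hL0 : ∀ u : Fin 5 → ℂ, L u = 0 := by
    intro u
    have : u ∈ W'' := by rw [hW''top]; trivial
    exact LinearMap.mem_ker.mp (hkill this)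
  refine ⟨v, hvW, hvne, fun j => ?_⟩
  have := hL0 (Pi.single j 1)
  rw [hLdef] at this
  simp only [LinearMap.coe_mk, AddHom.coe_mk] at this
  rw [sum_single_mul (fun i => eval v (pderiv i f)) j] at this
  exact this
end
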